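/- Let ω be a weight on ℝ with log ω ∈ BMO(ℝ). Then log ω ∈ VMO(ℝ) if and only if lim_{δ→0} sup_{|I|<δ} ((1/|I|)∫_I ω(x) dx)·exp(−(1/|I|)∫_I log ω(x) dx) = 1, where the supremum is over bounded intervals I ⊂ ℝ. -/

import Mathlib

open MeasureTheory intervalIntegral

/-- The average of `u` over the interval `(a, b)`. -/
noncomputable def intervalAvg (u : ℝ → ℝ) (a b : ℝ) : ℝ :=
  (1 / (b - a)) * ∫ x in a..b, u x

/-- The mean oscillation of `u` over the interval `(a, b)`. -/
noncomputable def meanOsc (u : ℝ → ℝ) (a b : ℝ) : ℝ :=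
  (1 / (b - a)) * ∫ x in a..b, |u x - intervalAvg u a b|


open Set Filter Real
open scoped Topology NNReal ENNReal

namespace JNAux

/-- average over `Ioc c d` -/
noncomputable def av (u : ℝ → ℝ) (c d : ℝ) : ℝ := (d - c)⁻¹ * ∫ x in Set.Ioc c d, u x

lemma intervalAvg_eq_av (u : ℝ → ℝ) {c d : ℝ} (h : c ≤ d) : intervalAvg u c d = av u c d := by
  rw [intervalAvg, av, intervalIntegral.integral_of_le h, one_div]

lemma meanOsc_eq (u : ℝ → ℝ) {c d : ℝ} (h : c ≤ d) :
    meanOsc u c d = (d - c)⁻¹ * ∫ x in Set.Ioc c d, |u x - av u c d| := by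
  rw [meanOsc, intervalIntegral.integral_of_le h, one_div, intervalAvg_eq_av u h]

lemma integrableOn_Ioc {u : ℝ → ℝ} (hu : LocallyIntegrable u volume) (c d : ℝ) :
    IntegrableOn u (Set.Ioc c d) volume :=
  (hu.integrableOn_isCompact isCompact_Icc).mono_set Set.Ioc_subset_Icc_self

lemma integral_sub_av {u : ℝ → ℝ} (hu : LocallyIntegrable u volume) {c d : ℝ} (h : c < d) :
    ∫ x in Set.Ioc c d, (u x - av u c d) = 0 := by
  have hi := integrableOn_Ioc hu c d
  rw [MeasureTheory.integral_sub hi (integrableOn_const (by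
    simp [Real.volume_Ioc]))]
  have : ∫ _x in Set.Ioc c d, av u c d = (d - c) * av u c d := by
    rw [MeasureTheory.setIntegral_const]
    simp [Real.volume_Ioc, ENNReal.toReal_ofReal (le_of_lt (sub_pos.2 h)), h.le]
  rw [this, av, ← mul_assoc, mul_inv_cancel₀ (by linarith), one_mul, sub_self]

lemma osc_integral {u : ℝ → ℝ} {c d : ℝ} (h : c < d) :
    ∫ x in Set.Ioc c d, |u x - av u c d| = (d - c) * meanOsc u c d := by
  rw [meanOsc_eq u h.le, ← mul_assoc, mul_inv_cancel₀ (by linarith), one_mul]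

end JNAux

namespace JNAux

lemma sq_max_le {s : ℝ} : max s 0 ^ 2 ≤ 2 * (Real.exp s - 1 - s) := by
  rcases le_or_gt s 0 with h | h
  · rw [max_eq_right h]
    have := Real.add_one_le_exp s
    nlinarith
  · rw [max_eq_left h.le]
    have := Real.quadratic_le_exp_of_nonneg h.le
    nlinarith

lemma easy_dir (ω u : ℝ → ℝ) (hωu : ∀ x, ω x = Real.exp (u x))
    (hloc : LocallyIntegrable ω volume) (hu : LocallyIntegrable u volume)
    {c d : ℝ} (h : c < d) {θ : ℝ} (hθ : 0 < θ) :
    meanOsc u c d ≤ θ + 2 * (av ω c d * Real.exp (-(av u c d)) - 1) / θ := by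
  set ℓ := d - c with hℓdef
  have hℓ : 0 < ℓ := sub_pos.2 h
  set A := av u c d with hA
  set R := av ω c d * Real.exp (-A) with hR
  have hv_int : IntegrableOn (fun x => u x - A) (Set.Ioc c d) volume :=
    (integrableOn_Ioc hu c d).sub (integrableOn_const (by simp [Real.volume_Ioc]))
  have hev_eq : ∀ x, Real.exp (u x - A) = ω x * Real.exp (-A) := by
    intro x; rw [hωu x, ← Real.exp_add]; ring_nf
  have hev_int : IntegrableOn (fun x => Real.exp (u x - A)) (Set.Ioc c d) volume := by
    have : IntegrableOn (fun x => ω x * Real.exp (-A)) (Set.Ioc c d) volume :=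
      (integrableOn_Ioc hloc c d).mul_const _
    exact this.congr_fun (fun x _ => (hev_eq x).symm) measurableSet_Ioc
  have h1_int : IntegrableOn (fun _ : ℝ => (1:ℝ)) (Set.Ioc c d) volume :=
    integrableOn_const (by simp [Real.volume_Ioc])
  have hg_int : IntegrableOn (fun x => Real.exp (u x - A) - 1 - (u x - A)) (Set.Ioc c d) volume :=
    (hev_int.sub h1_int).sub hv_int
  have hvol : (volume (Set.Ioc c d)).toReal = ℓ := by
    rw [Real.volume_Ioc, ENNReal.toReal_ofReal (sub_pos.2 h).le]
  -- integral of exp v equals ℓ * R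
  have hIev : ∫ x in Set.Ioc c d, Real.exp (u x - A) = ℓ * R := by
    calc ∫ x in Set.Ioc c d, Real.exp (u x - A)
        = ∫ x in Set.Ioc c d, ω x * Real.exp (-A) := by
          exact setIntegral_congr_fun measurableSet_Ioc fun x _ => hev_eq x
      _ = (∫ x in Set.Ioc c d, ω x) * Real.exp (-A) := by
          rw [MeasureTheory.integral_mul_const]
      _ = ℓ * R := by
          have hone : ℓ * (d - c)⁻¹ = 1 := by rw [hℓdef]; exact mul_inv_cancel₀ (sub_pos.2 h).ne'
          rw [hR, av, ← mul_assoc, ← mul_assoc, hone, one_mul]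
  have hIv : ∫ x in Set.Ioc c d, (u x - A) = 0 := integral_sub_av hu h
  have hI1 : ∫ _x in Set.Ioc c d, (1:ℝ) = ℓ := by
    rw [MeasureTheory.setIntegral_const, MeasureTheory.measureReal_def, hvol, smul_eq_mul, mul_one]
  have hf1 : IntegrableOn (fun x => Real.exp (u x - A) - 1) (Set.Ioc c d) volume :=
    hev_int.sub h1_int
  have hIg : ∫ x in Set.Ioc c d, (Real.exp (u x - A) - 1 - (u x - A)) = ℓ * (R - 1) := by
    rw [MeasureTheory.integral_sub hf1 hv_int,
      MeasureTheory.integral_sub hev_int h1_int, hIev, hIv, hI1]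
    ring
  -- integrability of (max v 0)^2
  have hmax_meas : AEStronglyMeasurable (fun x => max (u x - A) 0 ^ 2)
      (volume.restrict (Set.Ioc c d)) := by
    have : Continuous fun s : ℝ => max s 0 ^ 2 := by fun_prop
    exact this.comp_aestronglyMeasurable hv_int.aestronglyMeasurable
  have hsq_int : IntegrableOn (fun x => max (u x - A) 0 ^ 2) (Set.Ioc c d) volume := by
    refine Integrable.mono' (hg_int.const_mul 2) hmax_meas ?_
    refine Eventually.of_forall fun x => ?_
    rw [Real.norm_eq_abs, abs_of_nonneg (by positivity)]
    exact sq_max_le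
  have hIsq : ∫ x in Set.Ioc c d, max (u x - A) 0 ^ 2 ≤ 2 * (ℓ * (R - 1)) := by
    calc ∫ x in Set.Ioc c d, max (u x - A) 0 ^ 2
        ≤ ∫ x in Set.Ioc c d, 2 * (Real.exp (u x - A) - 1 - (u x - A)) :=
          setIntegral_mono_on hsq_int (hg_int.const_mul 2) measurableSet_Ioc
            (fun x _ => sq_max_le)
      _ = 2 * (ℓ * (R - 1)) := by rw [MeasureTheory.integral_const_mul, hIg]
  -- pointwise AM-GM
  have hmax_int : IntegrableOn (fun x => max (u x - A) 0) (Set.Ioc c d) volume := by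
    refine Integrable.mono' (hv_int.abs) ?_ (Eventually.of_forall fun x => ?_)
    · have : Continuous fun s : ℝ => max s 0 := by fun_prop
      exact this.comp_aestronglyMeasurable hv_int.aestronglyMeasurable
    · rw [Real.norm_eq_abs, abs_of_nonneg (le_max_right _ _)]
      exact max_le (le_abs_self _) (abs_nonneg _)
  have hImax : ∫ x in Set.Ioc c d, max (u x - A) 0 ≤ θ / 2 * ℓ + (ℓ * (R - 1)) / θ := by
    have hquad : ∀ x, max (u x - A) 0 ≤ θ / 2 + max (u x - A) 0 ^ 2 / (2 * θ) := by
      intro x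
      set m := max (u x - A) 0 with hm
      have h2θ : (0:ℝ) < 2 * θ := by positivity
      have hmm : (m - θ / 2) * (2 * θ) ≤ m ^ 2 := by nlinarith [sq_nonneg (m - θ)]
      have h3 : m - θ / 2 ≤ m ^ 2 / (2 * θ) := (le_div_iff₀ h2θ).2 hmm
      linarith
    calc ∫ x in Set.Ioc c d, max (u x - A) 0
        ≤ ∫ x in Set.Ioc c d, (θ / 2 + max (u x - A) 0 ^ 2 / (2 * θ)) := by
          refine setIntegral_mono_on hmax_int ?_ measurableSet_Ioc (fun x _ => hquad x)
          exact (integrableOn_const (by simp [Real.volume_Ioc])).add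
            (hsq_int.div_const _)
      _ = θ / 2 * ℓ + (∫ x in Set.Ioc c d, max (u x - A) 0 ^ 2) / (2 * θ) := by
          rw [MeasureTheory.integral_add (integrableOn_const (by simp [Real.volume_Ioc]) :
              IntegrableOn (fun _ : ℝ => θ / 2) (Set.Ioc c d) volume)
            (hsq_int.div_const _), MeasureTheory.setIntegral_const, MeasureTheory.measureReal_def, MeasureTheory.integral_div, hvol,
            smul_eq_mul]
          ring
      _ ≤ θ / 2 * ℓ + (2 * (ℓ * (R - 1))) / (2 * θ) := by
          gcongr
      _ = θ / 2 * ℓ + (ℓ * (R - 1)) / θ := by ring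
  -- |v| = 2 max v 0 - v
  have habs : ∫ x in Set.Ioc c d, |u x - A| = 2 * ∫ x in Set.Ioc c d, max (u x - A) 0 := by
    have : ∀ x, |u x - A| = 2 * max (u x - A) 0 - (u x - A) := by
      intro x
      rcases le_or_gt (u x - A) 0 with hx | hx
      · rw [abs_of_nonpos hx, max_eq_right hx]; ring
      · rw [abs_of_pos hx, max_eq_left hx.le]; ring
    rw [setIntegral_congr_fun measurableSet_Ioc (fun x _ => this x),
      MeasureTheory.integral_sub ((hmax_int.const_mul 2)) hv_int, hIv,
      MeasureTheory.integral_const_mul]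
    ring
  have hmo : meanOsc u c d = ℓ⁻¹ * ∫ x in Set.Ioc c d, |u x - A| := by
    rw [meanOsc_eq u h.le]
  rw [hmo, habs]
  have hfin : ℓ⁻¹ * (2 * ∫ x in Set.Ioc c d, max (u x - A) 0)
      ≤ ℓ⁻¹ * (2 * (θ / 2 * ℓ + (ℓ * (R - 1)) / θ)) := by
    gcongr
  calc ℓ⁻¹ * (2 * ∫ x in Set.Ioc c d, max (u x - A) 0)
      ≤ ℓ⁻¹ * (2 * (θ / 2 * ℓ + (ℓ * (R - 1)) / θ)) := hfin
    _ = θ + 2 * (R - 1) / θ := by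
        rw [hℓdef]
        field_simp [(sub_pos.2 h).ne']

/-! ### Dyadic subintervals -/

noncomputable def ep (a b : ℝ) (n i : ℕ) : ℝ := a + i * ((b - a) / 2 ^ n)

def dyI (a b : ℝ) (n i : ℕ) : Set ℝ := Set.Ioc (ep a b n i) (ep a b n (i + 1))

section Dyadic

variable {a b : ℝ} (hab : a < b)

include hab

lemma hpos (n : ℕ) : (0:ℝ) < (b - a) / 2 ^ n := by
  have : (0:ℝ) < b - a := sub_pos.2 hab
  positivity

lemma ep_lt {n i j : ℕ} (hij : i < j) : ep a b n i < ep a b n j := by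
  have : (i:ℝ) * ((b - a) / 2 ^ n) < (j:ℝ) * ((b - a) / 2 ^ n) := by
    apply mul_lt_mul_of_pos_right _ (hpos hab n)
    exact_mod_cast hij
  simpa [ep] using this

lemma ep_mono {n i j : ℕ} (hij : i ≤ j) : ep a b n i ≤ ep a b n j := by
  rcases eq_or_lt_of_le hij with rfl | h
  · exact le_rfl
  · exact (ep_lt hab h).le

omit hab in lemma ep_len (n i : ℕ) : ep a b n (i + 1) - ep a b n i = (b - a) / 2 ^ n := by
  simp only [ep]
  push_cast
  ring

omit hab in lemma ep_self (n : ℕ) : ep a b n 0 = a := by simp [ep]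

omit hab in lemma ep_last (n : ℕ) : ep a b n (2 ^ n) = b := by
  simp only [ep]
  rw [Nat.cast_pow]
  field_simp
  push_cast
  ring

lemma dyI_nonempty (n i : ℕ) : (dyI a b n i).Nonempty :=
  Set.nonempty_Ioc.2 (ep_lt hab (Nat.lt_succ_self i))

lemma dyI_subset {n i : ℕ} (hi : i < 2 ^ n) : dyI a b n i ⊆ Set.Ioc a b := by
  apply Set.Ioc_subset_Ioc
  · conv_lhs => rw [← ep_self (a := a) (b := b) n]
    exact ep_mono hab (Nat.zero_le i)
  · conv_rhs => rw [← ep_last (a := a) (b := b) n]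
    exact ep_mono hab hi

omit hab in lemma ep_double (n i : ℕ) : ep a b (n + 1) (2 * i) = ep a b n i := by
  simp only [ep, pow_succ]
  push_cast
  field_simp

lemma dyI_child (n i : ℕ) : dyI a b (n + 1) i ⊆ dyI a b n (i / 2) := by
  apply Set.Ioc_subset_Ioc
  · rw [← ep_double]
    exact ep_mono hab (by omega)
  · rw [show ep a b n (i / 2 + 1) = ep a b (n+1) (2 * (i / 2 + 1)) from (ep_double (a:=a) (b:=b) n _).symm]
    apply ep_mono hab
    omega

lemma dyI_anc {m n : ℕ} (h : m ≤ n) (i : ℕ) : dyI a b n i ⊆ dyI a b m (i / 2 ^ (n - m)) := by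
  obtain ⟨k, rfl⟩ := Nat.exists_eq_add_of_le h
  clear h
  induction k generalizing i with
  | zero => simp
  | succ k ih =>
      have h1 : dyI a b (m + (k+1)) i ⊆ dyI a b (m + k) (i / 2) := dyI_child hab _ _
      refine h1.trans ?_
      have h2 := ih (i / 2)
      have : i / 2 / 2 ^ (m + k - m) = i / 2 ^ (m + (k+1) - m) := by
        rw [Nat.add_sub_cancel_left, Nat.add_sub_cancel_left, Nat.div_div_eq_div_mul]
        ring_nf
      rwa [this] at h2

lemma dyI_disj {n i j : ℕ} (hij : i ≠ j) : Disjoint (dyI a b n i) (dyI a b n j) := by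
  wlog h : i < j generalizing i j
  · exact (this hij.symm (by omega)).symm
  rw [Set.disjoint_left]
  intro x hx hx'
  have h1 : x ≤ ep a b n (i + 1) := hx.2
  have h2 : ep a b n j < x := hx'.1
  have : ep a b n (i+1) ≤ ep a b n j := ep_mono hab (by omega)
  linarith

lemma dyI_mem_succ {n i : ℕ} {x : ℝ} (hx : x ∈ dyI a b n i) :
    x ∈ dyI a b (n + 1) (2 * i) ∨ x ∈ dyI a b (n + 1) (2 * i + 1) := by
  rcases le_or_gt x (ep a b (n+1) (2*i+1)) with h | h
  · left
    exact ⟨by rw [ep_double]; exact hx.1, h⟩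
  · right
    refine ⟨h, ?_⟩
    have : 2 * i + 1 + 1 = 2 * (i + 1) := by ring
    rw [this, ep_double]
    exact hx.2

lemma dyI_exists_mem {x : ℝ} (hx : x ∈ Set.Ioc a b) (n : ℕ) :
    ∃ i, i < 2 ^ n ∧ x ∈ dyI a b n i := by
  induction n with
  | zero =>
      refine ⟨0, by norm_num, ?_⟩
      have h1 : ep a b 0 1 = b := by simpa using ep_last (a := a) (b := b) 0
      have : dyI a b 0 0 = Set.Ioc a b := by
        unfold dyI
        rw [ep_self, h1]
      rwa [this]
  | succ n ih =>
      obtain ⟨i, hi, hxi⟩ := ih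
      rcases dyI_mem_succ hab hxi with h | h
      · exact ⟨2 * i, by omega, h⟩
      · refine ⟨2 * i + 1, ?_, h⟩
        have : 2 ^ (n+1) = 2 * 2 ^ n := by ring
        omega

lemma dyI_nested {m n i j : ℕ} (hmn : m ≤ n) (hj : j < 2 ^ m)
    (hint : ¬ Disjoint (dyI a b n i) (dyI a b m j)) : dyI a b n i ⊆ dyI a b m j := by
  have h1 := dyI_anc hab hmn i
  have : i / 2 ^ (n - m) = j := by
    by_contra hne
    exact hint (((dyI_disj hab hne).mono_left h1))
  rwa [this] at h1

lemma dyI_sub_level {m n i j : ℕ} (hsub : dyI a b n i ⊆ dyI a b m j) : m ≤ n := by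
  by_contra hmn
  push_neg at hmn
  have h1 := (Set.Ioc_subset_Ioc_iff (ep_lt hab (Nat.lt_succ_self i))).1 hsub
  have hlen : ep a b n (i+1) - ep a b n i ≤ ep a b m (j+1) - ep a b m j := by linarith [h1.1, h1.2]
  rw [ep_len, ep_len] at hlen
  have h2 : (2:ℝ) ^ n < 2 ^ m := by
    have : (2:ℕ) ^ n < 2 ^ m := Nat.pow_lt_pow_right (by norm_num) hmn
    exact_mod_cast this
  have hba : (0:ℝ) < b - a := sub_pos.2 hab
  have := div_lt_div_of_pos_left hba (by positivity : (0:ℝ) < 2 ^ n) h2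
  linarith

lemma dyI_eq_iff {m n i j : ℕ} (heq : dyI a b n i = dyI a b m j) : n = m ∧ i = j := by
  have h1 : m ≤ n := dyI_sub_level hab heq.le
  have h2 : n ≤ m := dyI_sub_level hab heq.ge
  have hnm : n = m := le_antisymm h2 h1
  subst hnm
  refine ⟨rfl, ?_⟩
  by_contra hne
  have hd := dyI_disj hab (n := n) hne
  rw [heq] at hd
  exact (dyI_nonempty hab n j).ne_empty (disjoint_self.1 hd)

end Dyadic

/-! ### Lebesgue differentiation along shrinking intervals -/

lemma six_mul {s : ℝ} (hs : 0 ≤ s) :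
    ((6:ℝ≥0):ℝ≥0∞) * ENNReal.ofReal s = ENNReal.ofReal (6 * s) := by
  rw [ENNReal.ofReal_mul (by norm_num)]
  congr 1
  norm_num

lemma vitali_avg {u : ℝ → ℝ} (hu : LocallyIntegrable u volume) :
    ∀ᵐ x ∂(volume : Measure ℝ), ∀ (cs ds : ℕ → ℝ), (∀ n, cs n < ds n) →
      (∀ n, x ∈ Set.Icc (cs n) (ds n)) → Tendsto (fun n => ds n - cs n) atTop (𝓝 0) →
      Tendsto (fun n => av u (cs n) (ds n)) atTop (𝓝 (u x)) := by
  have h6 : ∀ x : ℝ, ∃ᶠ r in 𝓝[>] (0:ℝ),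
      volume (Metric.closedBall x (3 * r)) ≤ (6 : ℝ≥0) * volume (Metric.closedBall x r) := by
    intro x
    refine (eventually_mem_nhdsWithin.mono fun r hr => ?_).frequently
    have hr0 : (0:ℝ) < r := hr
    rw [Real.volume_closedBall, Real.volume_closedBall, six_mul (by positivity)]
    apply ENNReal.ofReal_le_ofReal
    nlinarith
  set v := Vitali.vitaliFamily (volume : Measure ℝ) 6 h6 with hv
  filter_upwards [v.ae_tendsto_average hu] with x hx cs ds hlt hmem hten
  have hsub : ∀ n, Set.Icc (cs n) (ds n) ⊆ Metric.closedBall x (ds n - cs n) := by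
    intro n y hy
    have h1 := hmem n
    rw [Metric.mem_closedBall, Real.dist_eq, abs_sub_le_iff]
    constructor <;> [linarith [hy.1, hy.2, h1.1, h1.2]; linarith [hy.1, hy.2, h1.1, h1.2]]
  have hset : ∀ n, Set.Icc (cs n) (ds n) ∈ v.setsAt x := by
    intro n
    refine ⟨isClosed_Icc, ?_, ⟨ds n - cs n, hsub n, ?_⟩⟩
    · rw [interior_Icc]
      exact Set.nonempty_Ioo.2 (hlt n)
    · have hl : (0:ℝ) ≤ ds n - cs n := (sub_pos.2 (hlt n)).le
      rw [Real.volume_closedBall, Real.volume_Icc, six_mul hl]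
      apply ENNReal.ofReal_le_ofReal
      nlinarith
  have htt : Tendsto (fun n => Set.Icc (cs n) (ds n)) atTop (v.filterAt x) := by
    rw [VitaliFamily.tendsto_filterAt_iff]
    refine ⟨Eventually.of_forall hset, fun ε hε => ?_⟩
    filter_upwards [hten.eventually_lt_const hε] with n hn
    exact (hsub n).trans (Metric.closedBall_subset_closedBall hn.le)
  have hfin := hx.comp htt
  refine hfin.congr fun n => ?_
  have hl : (0:ℝ) < ds n - cs n := sub_pos.2 (hlt n)
  rw [Function.comp_apply, setAverage_eq, MeasureTheory.measureReal_def, av, Real.volume_Icc,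
    MeasureTheory.integral_Icc_eq_integral_Ioc, smul_eq_mul,
    ENNReal.toReal_ofReal hl.le]

/-! ### Comparison of averages -/

lemma integral_Ioc_eq_av {u : ℝ → ℝ} {c d : ℝ} (h : c < d) :
    ∫ x in Set.Ioc c d, u x = (d - c) * av u c d := by
  rw [av, ← mul_assoc, mul_inv_cancel₀ (by linarith : d - c ≠ 0), one_mul]

lemma av_sub_const {u : ℝ → ℝ} (hu : LocallyIntegrable u volume) {c d : ℝ} (h : c < d) (K : ℝ) :
    ∫ x in Set.Ioc c d, (u x - K) = (d - c) * (av u c d - K) := by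
  rw [MeasureTheory.integral_sub (integrableOn_Ioc hu c d)
    (integrableOn_const (by simp [Real.volume_Ioc]))]
  rw [MeasureTheory.setIntegral_const, MeasureTheory.measureReal_def, integral_Ioc_eq_av h, Real.volume_Ioc,
    ENNReal.toReal_ofReal (by linarith : (0:ℝ) ≤ d - c), smul_eq_mul]
  ring

lemma av_sub_av_le {u : ℝ → ℝ} (hu : LocallyIntegrable u volume) {c d c' d' : ℝ}
    (hcd : c < d) (hcd' : c' < d') (hsub : Set.Ioc c d ⊆ Set.Ioc c' d') :
    av u c d - av u c' d' ≤ ((d' - c') / (d - c)) * meanOsc u c' d' := by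
  set K := av u c' d'
  have h1 : (d - c) * (av u c d - K) = ∫ x in Set.Ioc c d, (u x - K) :=
    (av_sub_const hu hcd K).symm
  have habs_int : IntegrableOn (fun x => |u x - K|) (Set.Ioc c' d') volume :=
    ((integrableOn_Ioc hu c' d').sub
      (integrableOn_const (by simp [Real.volume_Ioc]))).abs
  have h2 : ∫ x in Set.Ioc c d, (u x - K) ≤ ∫ x in Set.Ioc c' d', |u x - K| := by
    calc ∫ x in Set.Ioc c d, (u x - K) ≤ ∫ x in Set.Ioc c d, |u x - K| := by
          apply setIntegral_mono_on
          · exact (integrableOn_Ioc hu c d).sub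
              (integrableOn_const (by simp [Real.volume_Ioc]))
          · exact habs_int.mono_set hsub
          · exact measurableSet_Ioc
          · exact fun x _ => le_abs_self _
      _ ≤ ∫ x in Set.Ioc c' d', |u x - K| := by
          apply setIntegral_mono_set habs_int
          · exact Eventually.of_forall fun x => abs_nonneg _
          · exact HasSubset.Subset.eventuallyLE hsub
  have h3 : ∫ x in Set.Ioc c' d', |u x - K| = (d' - c') * meanOsc u c' d' := osc_integral hcd'
  have hdc : (0:ℝ) < d - c := by linarith
  rw [div_mul_eq_mul_div, le_div_iff₀ hdc] at *
  nlinarith [h1, h2, h3]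

/-! ### The stopping time construction -/

def stopped (u : ℝ → ℝ) (a b t : ℝ) (n i : ℕ) : Prop :=
  i < 2 ^ n ∧ av u a b + t < av u (ep a b n i) (ep a b n (i + 1)) ∧
  ∀ m j, j < 2 ^ m → dyI a b m j ≠ dyI a b n i → dyI a b n i ⊆ dyI a b m j →
    av u (ep a b m j) (ep a b m (j + 1)) ≤ av u a b + t

section Stopping

variable {u : ℝ → ℝ} {a b t : ℝ} (hab : a < b)
include hab

/-- every point in a "bad" dyadic interval lies in a stopped interval -/
lemma stopped_of_bad {x : ℝ} {n i : ℕ} (hi : i < 2 ^ n) (hxi : x ∈ dyI a b n i)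
    (hbad : av u a b + t < av u (ep a b n i) (ep a b n (i + 1))) :
    ∃ m j, stopped u a b t m j ∧ x ∈ dyI a b m j := by
  have hex : ∃ m, ∃ j, j < 2 ^ m ∧ x ∈ dyI a b m j ∧
      av u a b + t < av u (ep a b m j) (ep a b m (j + 1)) := ⟨n, i, hi, hxi, hbad⟩
  classical
  obtain ⟨j, hj, hxj, hbadj⟩ := Nat.find_spec hex
  refine ⟨Nat.find hex, j, ⟨hj, hbadj, ?_⟩, hxj⟩
  intro m k hk hne hsub
  have hmle : m ≤ Nat.find hex := dyI_sub_level hab hsub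
  have hmlt : m < Nat.find hex := by
    rcases eq_or_lt_of_le hmle with heq | h
    · exfalso
      rw [heq] at hsub hne
      rcases eq_or_ne k j with rfl | hkj
      · exact hne rfl
      · obtain ⟨y, hy⟩ := dyI_nonempty hab (n := Nat.find hex) (i := j)
        exact Set.disjoint_left.1 (dyI_disj hab hkj) (hsub hy) hy
    · exact h
  by_contra hgt
  push_neg at hgt
  exact Nat.find_min hex hmlt ⟨k, hk, hsub hxj, hgt⟩

lemma stopped_disjoint {n i m j : ℕ} (h1 : stopped u a b t n i) (h2 : stopped u a b t m j)
    (hne : (n, i) ≠ (m, j)) : Disjoint (dyI a b n i) (dyI a b m j) := by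
  by_contra hint
  have hdne : dyI a b n i ≠ dyI a b m j := by
    intro he
    obtain ⟨h3, h4⟩ := dyI_eq_iff hab he
    exact hne (by simp [h3, h4])
  rcases le_or_gt m n with hmn | hmn
  · have hsub : dyI a b n i ⊆ dyI a b m j := dyI_nested hab hmn h2.1 hint
    exact absurd (h1.2.2 m j h2.1 (Ne.symm hdne) hsub) (not_le.2 h2.2.1)
  · have hsub : dyI a b m j ⊆ dyI a b n i :=
      dyI_nested hab hmn.le h1.1 (fun hd => hint hd.symm)
    exact absurd (h2.2.2 n i h1.1 hdne hsub) (not_le.2 h1.2.1)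

end Stopping

/-! ### Auxiliary pointwise lemmas -/

lemma min_mul_le {A B m : ℝ} (hA : 1 ≤ A) (hm : 0 ≤ m) :
    min (A * B) m ≤ A * min B m := by
  rcases le_total B m with h | h
  · rw [min_eq_left h]; exact min_le_left _ _
  · rw [min_eq_right h]
    exact (min_le_right _ _).trans (le_mul_of_one_le_left hm hA)

lemma exp_le_linear {s : ℝ} (hs : s ≤ 1/2) : Real.exp s ≤ 1 + s + 2 * |s| := by
  rcases le_or_gt s 0 with h | h
  · rw [abs_of_nonpos h]
    have := Real.exp_le_one_iff.2 h
    linarith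
  · rw [abs_of_pos h]
    have h1 : 1 - s ≤ Real.exp (-s) := by linarith [Real.add_one_le_exp (-s)]
    have h2 : 0 < 1 - s := by linarith
    have h3 : Real.exp s * (1 - s) ≤ 1 := by
      have := mul_le_mul_of_nonneg_left h1 (Real.exp_pos s).le
      rwa [← Real.exp_add, add_neg_cancel, Real.exp_zero] at this
    nlinarith [Real.exp_pos s]

section Exps

variable {u : ℝ → ℝ} (hw : LocallyIntegrable (fun x => Real.exp (u x)) volume)
include hw

lemma exp_shift_int (K c d : ℝ) :
    IntegrableOn (fun x => Real.exp (u x - K)) (Set.Ioc c d) volume := by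
  have h : IntegrableOn (fun x => Real.exp (u x) * Real.exp (-K)) (Set.Ioc c d) volume :=
    (integrableOn_Ioc hw c d).mul_const (Real.exp (-K))
  refine h.congr_fun (fun x _ => ?_) measurableSet_Ioc
  beta_reduce
  rw [← Real.exp_add]
  ring_nf

lemma min_exp_int {m : ℝ} (hm : 0 ≤ m) (K c d : ℝ) :
    IntegrableOn (fun x => min (Real.exp (u x - K)) m) (Set.Ioc c d) volume := by
  have he := exp_shift_int hw K c d
  refine Integrable.mono' he ?_ (Eventually.of_forall fun x => ?_)
  · exact (continuous_min.comp (by fun_prop : Continuous fun s : ℝ => (s, m))).comp_aestronglyMeasurable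
      he.aestronglyMeasurable
  · rw [Real.norm_eq_abs, abs_of_nonneg (le_min (Real.exp_pos _).le hm)]
    exact min_le_left _ _

end Exps

/-! ### The key recursion bound -/

lemma rec_bound {u : ℝ → ℝ} (hu : LocallyIntegrable u volume)
    (hw : LocallyIntegrable (fun x => Real.exp (u x)) volume)
    {t δ : ℝ} (ht : 0 < t) (ht8 : t ≤ 1/8) (hδ : 0 < δ)
    (hosc : ∀ c d : ℝ, c < d → d - c < δ → meanOsc u c d ≤ t ^ 2)
    {m : ℝ} (hm : 0 ≤ m) {S : ℝ} (hS0 : 0 ≤ S)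
    (hS : ∀ c d : ℝ, c < d → d - c < δ →
      (d - c)⁻¹ * (∫ x in Set.Ioc c d, min (Real.exp (u x - av u c d)) m) ≤ S)
    {a b : ℝ} (hab : a < b) (hlen : b - a < δ) :
    (b - a)⁻¹ * (∫ x in Set.Ioc a b, min (Real.exp (u x - av u a b)) m)
      ≤ 1 + 2 * t ^ 2 + Real.exp (3 * t) * t * S := by
  classical
  set ℓ := b - a with hℓdef
  have hℓ : 0 < ℓ := sub_pos.2 hab
  set c₀ := av u a b with hc₀
  set fm : ℝ → ℝ := fun x => min (Real.exp (u x - c₀)) m with hfm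
  have hfm_nonneg : ∀ x, 0 ≤ fm x := fun x => le_min (Real.exp_pos _).le hm
  have hfm_int : ∀ c d : ℝ, IntegrableOn fm (Set.Ioc c d) volume :=
    fun c d => min_exp_int hw hm c₀ c d
  have hconst_int : ∀ c d : ℝ, IntegrableOn (fun _ : ℝ => c₀) (Set.Ioc c d) volume :=
    fun c d => integrableOn_const (by simp [Real.volume_Ioc])
  have hv_int : IntegrableOn (fun x => u x - c₀) (Set.Ioc a b) volume :=
    (integrableOn_Ioc hu a b).sub (hconst_int a b)
  set K : ℕ × ℕ → Set ℝ :=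
    fun p => if stopped u a b t p.1 p.2 then dyI a b p.1 p.2 else ∅ with hK
  have hKmeas : ∀ p, MeasurableSet (K p) := by
    intro p
    by_cases h : stopped u a b t p.1 p.2 <;> simp [hK, h, dyI, measurableSet_Ioc]
  have hKsub : ∀ p, K p ⊆ Set.Ioc a b := by
    intro p
    by_cases h : stopped u a b t p.1 p.2
    · simp only [hK, if_pos h]
      exact dyI_subset hab h.1
    · simp [hK, if_neg h]
  have hKdisj : Pairwise (Function.onFun Disjoint K) := by
    intro p q hpq
    by_cases hp : stopped u a b t p.1 p.2
    · by_cases hq : stopped u a b t q.1 q.2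
      · simp only [Function.onFun, hK, if_pos hp, if_pos hq]
        exact stopped_disjoint hab hp hq (by simpa using hpq)
      · simp [Function.onFun, hK, if_neg hq]
    · simp [Function.onFun, hK, if_neg hp]
  -- Step A : complement bound
  have hae : ∀ᵐ x ∂(volume : Measure ℝ), x ∈ Set.Ioc a b \ (⋃ p, K p) → u x ≤ c₀ + t := by
    filter_upwards [vitali_avg hu] with x hx hxmem
    obtain ⟨hxI, hxU⟩ := hxmem
    have hgood : ∀ n i, i < 2 ^ n → x ∈ dyI a b n i →
        av u (ep a b n i) (ep a b n (i + 1)) ≤ c₀ + t := by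
      intro n i hi hxi
      by_contra hgt
      push_neg at hgt
      obtain ⟨m', j, hst, hxj⟩ := stopped_of_bad hab hi hxi hgt
      exact hxU (Set.mem_iUnion.2 ⟨(m', j), by simp only [hK, if_pos hst]; exact hxj⟩)
    choose ii hii hxii using fun n => dyI_exists_mem hab hxI n
    have htend : Tendsto (fun n : ℕ => ep a b n (ii n + 1) - ep a b n (ii n)) atTop (𝓝 0) := by
      have heq : (fun n : ℕ => ep a b n (ii n + 1) - ep a b n (ii n))
          = fun n : ℕ => ℓ * (1/2 : ℝ) ^ n := by
        funext n
        rw [ep_len]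
        rw [div_pow, one_pow, div_eq_mul_inv, div_eq_mul_inv, one_mul]
      rw [heq]
      simpa using (tendsto_pow_atTop_nhds_zero_of_lt_one (by norm_num : (0:ℝ) ≤ 1/2)
        (by norm_num : (1/2:ℝ) < 1)).const_mul ℓ
    have hlim := hx (fun n => ep a b n (ii n)) (fun n => ep a b n (ii n + 1))
      (fun n => ep_lt hab (Nat.lt_succ_self _))
      (fun n => Set.Ioc_subset_Icc_self (hxii n)) htend
    exact le_of_tendsto hlim (Eventually.of_forall fun n => hgood n (ii n) (hii n) (hxii n))
  -- Step B : bounds on each stopped interval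
  have h2n : ∀ n : ℕ, (1:ℝ) ≤ 2 ^ n := fun n => by
    exact_mod_cast Nat.one_le_two_pow (n := n)
  have hlenJle : ∀ n : ℕ, ℓ / 2 ^ n ≤ ℓ := fun n => by
    apply div_le_self hℓ.le (h2n n)
  have hpiece : ∀ n i, stopped u a b t n i →
      ((∫ x in dyI a b n i, fm x) ≤ Real.exp (3*t) * S * (ℓ / 2 ^ n)
      ∧ t * (ℓ / 2 ^ n) ≤ ∫ x in dyI a b n i, (u x - c₀)) := by
    intro n i hst
    have hi := hst.1
    have hLR : ep a b n i < ep a b n (i+1) := ep_lt hab (Nat.lt_succ_self _)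
    have hlenJ : ep a b n (i+1) - ep a b n i = ℓ / 2 ^ n := ep_len n i
    have hJδ : ep a b n (i+1) - ep a b n i < δ := by
      rw [hlenJ]; linarith [hlenJle n]
    -- upper bound on the average over J
    have hupper : av u (ep a b n i) (ep a b n (i+1)) ≤ c₀ + t + 2 * t ^ 2 := by
      rcases n with _ | n'
      · exfalso
        have hi0 : i = 0 := by omega
        subst hi0
        have h1 : ep a b 0 1 = b := by simpa using ep_last (a := a) (b := b) 0
        have h0 : ep a b 0 0 = a := ep_self 0
        have := hst.2.1
        rw [h0, h1] at this
        simp only [← hc₀] at this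
        linarith [ht]
      · have hj : i / 2 < 2 ^ n' := by
          have := hi
          have h2 : (2:ℕ) ^ (n'+1) = 2 * 2 ^ n' := by ring
          omega
        have hchild := dyI_child hab (a := a) (b := b) n' i
        have hPne : dyI a b n' (i/2) ≠ dyI a b (n'+1) i := by
          intro he
          obtain ⟨h1, _⟩ := dyI_eq_iff hab he
          omega
        have hPle := hst.2.2 n' (i/2) hj hPne hchild
        have hPL : ep a b n' (i/2) < ep a b n' (i/2+1) := ep_lt hab (Nat.lt_succ_self _)
        have hPlen : ep a b n' (i/2+1) - ep a b n' (i/2) = ℓ / 2 ^ n' := ep_len n' (i/2)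
        have hPδ : ep a b n' (i/2+1) - ep a b n' (i/2) < δ := by
          rw [hPlen]; linarith [hlenJle n']
        have hoscP := hosc _ _ hPL hPδ
        have hdiff := av_sub_av_le hu hLR hPL hchild
        have hratio : (ep a b n' (i/2+1) - ep a b n' (i/2)) / (ep a b (n'+1) (i+1) - ep a b (n'+1) i) = 2 := by
          rw [hPlen, ep_len, ← hℓdef, pow_succ]
          rw [div_div_div_eq]
          have h2 : (2:ℝ) ^ n' ≠ 0 := by positivity
          field_simp
        rw [hratio] at hdiff
        linarith [hdiff, hPle, hoscP]
    have hA1 : (1:ℝ) ≤ Real.exp (av u (ep a b n i) (ep a b n (i+1)) - c₀) := by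
      rw [show (1:ℝ) = Real.exp 0 from (Real.exp_zero).symm]
      apply Real.exp_le_exp.2
      linarith [hst.2.1]
    have hA3 : Real.exp (av u (ep a b n i) (ep a b n (i+1)) - c₀) ≤ Real.exp (3*t) := by
      apply Real.exp_le_exp.2
      nlinarith [hupper, ht, ht8]
    constructor
    · -- integral of fm over J
      have hpt : ∀ x, fm x ≤ Real.exp (3*t) * min (Real.exp (u x - av u (ep a b n i) (ep a b n (i+1)))) m := by
        intro x
        have hdecomp : Real.exp (u x - c₀)
            = Real.exp (av u (ep a b n i) (ep a b n (i+1)) - c₀)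
              * Real.exp (u x - av u (ep a b n i) (ep a b n (i+1))) := by
          rw [← Real.exp_add]; ring_nf
        calc fm x = min (Real.exp (u x - c₀)) m := rfl
          _ ≤ Real.exp (av u (ep a b n i) (ep a b n (i+1)) - c₀)
              * min (Real.exp (u x - av u (ep a b n i) (ep a b n (i+1)))) m := by
                rw [hdecomp]; exact min_mul_le hA1 hm
          _ ≤ Real.exp (3*t) * min (Real.exp (u x - av u (ep a b n i) (ep a b n (i+1)))) m := by
                apply mul_le_mul_of_nonneg_right hA3
                exact le_min (Real.exp_pos _).le hm
      have hSJ := hS (ep a b n i) (ep a b n (i+1)) hLR hJδ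
      have hJint : ∫ x in Set.Ioc (ep a b n i) (ep a b n (i+1)),
          min (Real.exp (u x - av u (ep a b n i) (ep a b n (i+1)))) m ≤ (ℓ / 2 ^ n) * S := by
        have hpos : (0:ℝ) < ep a b n (i+1) - ep a b n i := by linarith
        rw [← hlenJ]
        have := mul_le_mul_of_nonneg_left hSJ hpos.le
        rw [← mul_assoc, mul_inv_cancel₀ hpos.ne', one_mul] at this
        exact this
      calc (∫ x in dyI a b n i, fm x)
          ≤ ∫ x in Set.Ioc (ep a b n i) (ep a b n (i+1)),
              Real.exp (3*t) * min (Real.exp (u x - av u (ep a b n i) (ep a b n (i+1)))) m := by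
            apply setIntegral_mono_on (hfm_int _ _)
              ((min_exp_int hw hm _ _ _).const_mul _)
              measurableSet_Ioc (fun x _ => hpt x)
        _ = Real.exp (3*t) * ∫ x in Set.Ioc (ep a b n i) (ep a b n (i+1)),
              min (Real.exp (u x - av u (ep a b n i) (ep a b n (i+1)))) m :=
            MeasureTheory.integral_const_mul _ _
        _ ≤ Real.exp (3*t) * ((ℓ / 2 ^ n) * S) := by
            apply mul_le_mul_of_nonneg_left hJint (Real.exp_pos _).le
        _ = Real.exp (3*t) * S * (ℓ / 2 ^ n) := by ring
    · -- the measure bound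
      have := av_sub_const hu hLR c₀
      rw [show (∫ x in dyI a b n i, (u x - c₀)) = (ep a b n (i+1) - ep a b n i) * (av u (ep a b n i) (ep a b n (i+1)) - c₀) from av_sub_const hu hLR c₀]
      rw [hlenJ]
      have h1 : t ≤ av u (ep a b n i) (ep a b n (i+1)) - c₀ := by linarith [hst.2.1]
      have h2 : (0:ℝ) ≤ ℓ / 2 ^ n := by positivity
      nlinarith
  -- Step C : finite sums
  set g : ℕ × ℕ → ℝ := fun p => ∫ x in K p, fm x with hg
  have hgnn : ∀ p, 0 ≤ g p :=
    fun p => setIntegral_nonneg (hKmeas p) (fun x _ => hfm_nonneg x)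
  have hIabs : ∫ x in Set.Ioc a b, |u x - c₀| ≤ ℓ * t ^ 2 := by
    rw [osc_integral hab]
    have := hosc a b hab hlen
    nlinarith [hℓ]
  have habs_int : IntegrableOn (fun x => |u x - c₀|) (Set.Ioc a b) volume := hv_int.abs
  have hsum : ∀ F : Finset (ℕ × ℕ), ∑ p ∈ F, g p ≤ Real.exp (3*t) * S * (t * ℓ) := by
    intro F
    set F' := F.filter (fun p => stopped u a b t p.1 p.2) with hF'
    have hsum_eq : ∑ p ∈ F, g p = ∑ p ∈ F', g p := by
      apply (Finset.sum_subset (Finset.filter_subset _ _) ?_).symm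
      intro p hp hp'
      have hns : ¬ stopped u a b t p.1 p.2 := by
        intro hs
        exact hp' (Finset.mem_filter.2 ⟨hp, hs⟩)
      simp [hg, hK, if_neg hns]
    have hstF : ∀ p ∈ F', stopped u a b t p.1 p.2 := fun p hp => (Finset.mem_filter.1 hp).2
    have hvolsum : ∑ p ∈ F', (ℓ / 2 ^ p.1) ≤ t * ℓ := by
      have h1 : ∀ p ∈ F', t * (ℓ / 2 ^ p.1) ≤ ∫ x in K p, (u x - c₀) := by
        intro p hp
        have hst := hstF p hp
        have := (hpiece p.1 p.2 hst).2
        simpa [hK, if_pos hst] using this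
      have h2 : ∑ p ∈ F', (∫ x in K p, (u x - c₀))
          = ∫ x in ⋃ p ∈ F', K p, (u x - c₀) := by
        exact (integral_biUnion_finset F' (fun p _ => hKmeas p)
          (hKdisj.set_pairwise _) (fun p _ => hv_int.mono_set (hKsub p))).symm
      have hUsub' : (⋃ p ∈ F', K p) ⊆ Set.Ioc a b := Set.iUnion₂_subset fun p _ => hKsub p
      have hUmeas' : MeasurableSet (⋃ p ∈ F', K p) :=
        MeasurableSet.biUnion F'.countable_toSet (fun p _ => hKmeas p)
      have h3 : ∫ x in ⋃ p ∈ F', K p, (u x - c₀) ≤ ℓ * t ^ 2 := by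
        calc ∫ x in ⋃ p ∈ F', K p, (u x - c₀)
            ≤ ∫ x in ⋃ p ∈ F', K p, |u x - c₀| := by
              apply setIntegral_mono_on (hv_int.mono_set hUsub')
                (habs_int.mono_set hUsub') hUmeas' (fun x _ => le_abs_self _)
          _ ≤ ∫ x in Set.Ioc a b, |u x - c₀| := by
              apply setIntegral_mono_set habs_int
                (Eventually.of_forall fun x => abs_nonneg _)
                (HasSubset.Subset.eventuallyLE hUsub')
          _ ≤ ℓ * t ^ 2 := hIabs
      have h4 : t * ∑ p ∈ F', (ℓ / 2 ^ p.1) ≤ ℓ * t ^ 2 := by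
        rw [Finset.mul_sum]
        calc ∑ p ∈ F', t * (ℓ / 2 ^ p.1) ≤ ∑ p ∈ F', ∫ x in K p, (u x - c₀) :=
              Finset.sum_le_sum h1
          _ = ∫ x in ⋃ p ∈ F', K p, (u x - c₀) := h2
          _ ≤ ℓ * t ^ 2 := h3
      have h5 : t * ∑ p ∈ F', (ℓ / 2 ^ p.1) ≤ t * (t * ℓ) := by nlinarith
      exact le_of_mul_le_mul_left h5 ht
    rw [hsum_eq]
    calc ∑ p ∈ F', g p ≤ ∑ p ∈ F', Real.exp (3*t) * S * (ℓ / 2 ^ p.1) := by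
          apply Finset.sum_le_sum
          intro p hp
          have hst := hstF p hp
          have := (hpiece p.1 p.2 hst).1
          simpa [hg, hK, if_pos hst] using this
      _ = Real.exp (3*t) * S * ∑ p ∈ F', (ℓ / 2 ^ p.1) := by
          rw [← Finset.mul_sum]
      _ ≤ Real.exp (3*t) * S * (t * ℓ) := by
          apply mul_le_mul_of_nonneg_left hvolsum (by positivity)
  -- Step D : the union bound
  have hUsub : (⋃ p, K p) ⊆ Set.Ioc a b := Set.iUnion_subset hKsub
  have hU_int : IntegrableOn fm (⋃ p, K p) volume := (hfm_int a b).mono_set hUsub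
  have hHas := MeasureTheory.hasSum_integral_iUnion hKmeas hKdisj hU_int
  have hUbound : ∫ x in ⋃ p, K p, fm x ≤ Real.exp (3*t) * S * (t * ℓ) := by
    rw [← hHas.tsum_eq]
    exact Summable.tsum_le_of_sum_le hHas.summable hsum
  -- Step E : the complement bound
  set gl : ℝ → ℝ := fun x => 1 + (u x - c₀) + 2 * |u x - c₀| with hgl
  have hgl_int : IntegrableOn gl (Set.Ioc a b) volume := by
    apply Integrable.add
    · exact (integrableOn_const (by simp [Real.volume_Ioc])).add hv_int
    · exact habs_int.const_mul 2
  have hgl_nonneg : ∀ x, 0 ≤ gl x := by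
    intro x
    have h1 := neg_abs_le (u x - c₀)
    have h2 := abs_nonneg (u x - c₀)
    simp only [hgl]
    linarith
  have hdiff_meas : MeasurableSet (Set.Ioc a b \ ⋃ p, K p) :=
    measurableSet_Ioc.diff (MeasurableSet.iUnion hKmeas)
  have hdiffb : ∫ x in Set.Ioc a b \ (⋃ p, K p), fm x ≤ ℓ * (1 + 2 * t ^ 2) := by
    have h1 : ∫ x in Set.Ioc a b \ (⋃ p, K p), fm x
        ≤ ∫ x in Set.Ioc a b \ (⋃ p, K p), gl x := by
      apply setIntegral_mono_on_ae ((hfm_int a b).mono_set Set.diff_subset)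
        (hgl_int.mono_set Set.diff_subset) hdiff_meas
      filter_upwards [hae] with x hx hxs
      have hux : u x ≤ c₀ + t := hx hxs
      calc fm x ≤ Real.exp (u x - c₀) := min_le_left _ _
        _ ≤ gl x := exp_le_linear (by linarith)
    have h2 : ∫ x in Set.Ioc a b \ (⋃ p, K p), gl x ≤ ∫ x in Set.Ioc a b, gl x := by
      apply setIntegral_mono_set hgl_int (Eventually.of_forall hgl_nonneg)
        (HasSubset.Subset.eventuallyLE Set.diff_subset)
    have h3 : ∫ x in Set.Ioc a b, gl x = ℓ + 2 * (ℓ * meanOsc u a b) := by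
      rw [show (∫ x in Set.Ioc a b, gl x)
          = (∫ x in Set.Ioc a b, (1 + (u x - c₀))) + ∫ x in Set.Ioc a b, 2 * |u x - c₀| from
        MeasureTheory.integral_add
          ((integrableOn_const (by simp [Real.volume_Ioc])).add hv_int)
          (habs_int.const_mul 2)]
      rw [show (∫ x in Set.Ioc a b, (1 + (u x - c₀)))
          = (∫ _x in Set.Ioc a b, (1:ℝ)) + ∫ x in Set.Ioc a b, (u x - c₀) from
        MeasureTheory.integral_add
          (integrableOn_const (by simp [Real.volume_Ioc]) :
            IntegrableOn (fun _ : ℝ => (1:ℝ)) (Set.Ioc a b) volume) hv_int]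
      rw [MeasureTheory.integral_const_mul, osc_integral hab, av_sub_const hu hab c₀,
        MeasureTheory.setIntegral_const, MeasureTheory.measureReal_def, Real.volume_Ioc,
        ENNReal.toReal_ofReal hℓ.le, smul_eq_mul, mul_one]
      simp only [← hc₀, sub_self, mul_zero, add_zero, ← hℓdef]
    have h4 : ℓ + 2 * (ℓ * meanOsc u a b) ≤ ℓ * (1 + 2 * t ^ 2) := by
      have := hosc a b hab hlen
      nlinarith [hℓ]
    linarith
  -- combine
  have hsplit := MeasureTheory.integral_inter_add_diff (μ := volume) (f := fm)
    (s := Set.Ioc a b) (t := ⋃ p, K p) (MeasurableSet.iUnion hKmeas) (hfm_int a b)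
  have hIU : Set.Ioc a b ∩ (⋃ p, K p) = ⋃ p, K p :=
    Set.inter_eq_self_of_subset_right hUsub
  rw [hIU] at hsplit
  have htot : ∫ x in Set.Ioc a b, fm x
      ≤ Real.exp (3*t) * S * (t * ℓ) + ℓ * (1 + 2 * t ^ 2) := by
    rw [← hsplit]
    exact add_le_add hUbound hdiffb
  have hfin : ℓ⁻¹ * (∫ x in Set.Ioc a b, fm x)
      ≤ ℓ⁻¹ * (Real.exp (3*t) * S * (t * ℓ) + ℓ * (1 + 2 * t ^ 2)) := by
    apply mul_le_mul_of_nonneg_left htot (by positivity)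
  calc (b - a)⁻¹ * (∫ x in Set.Ioc a b, min (Real.exp (u x - av u a b)) m)
      = ℓ⁻¹ * (∫ x in Set.Ioc a b, fm x) := by rw [← hℓdef, ← hc₀, ← hfm]
    _ ≤ ℓ⁻¹ * (Real.exp (3*t) * S * (t * ℓ) + ℓ * (1 + 2 * t ^ 2)) := hfin
    _ = 1 + 2 * t ^ 2 + Real.exp (3 * t) * t * S := by
        field_simp
        ring

lemma exp_three_t_le {t : ℝ} (ht : 0 < t) (ht8 : t ≤ 1/8) : Real.exp (3*t) ≤ 8/5 := by
  have h1 : 1 - 3*t ≤ Real.exp (-(3*t)) := by linarith [Real.add_one_le_exp (-(3*t))]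
  have h3 : Real.exp (3*t) * (1 - 3*t) ≤ 1 := by
    have := mul_le_mul_of_nonneg_left h1 (Real.exp_pos (3*t)).le
    rwa [← Real.exp_add, add_neg_cancel, Real.exp_zero] at this
  nlinarith [Real.exp_pos (3*t)]

lemma jn_bound {u : ℝ → ℝ} (hu : LocallyIntegrable u volume)
    (hw : LocallyIntegrable (fun x => Real.exp (u x)) volume)
    {t δ : ℝ} (ht : 0 < t) (ht8 : t ≤ 1/8) (hδ : 0 < δ)
    (hosc : ∀ c d : ℝ, c < d → d - c < δ → meanOsc u c d ≤ t ^ 2)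
    {a b : ℝ} (hab : a < b) (hlen : b - a < δ) :
    (b - a)⁻¹ * (∫ x in Set.Ioc a b, Real.exp (u x - av u a b)) ≤ 1 + 4 * t := by
  set ℓ := b - a with hℓdef
  have hℓ : 0 < ℓ := sub_pos.2 hab
  have he3 := exp_three_t_le ht ht8
  -- uniform bound for each truncation level
  have hstep : ∀ m : ℕ,
      (∫ x in Set.Ioc a b, min (Real.exp (u x - av u a b)) (m:ℝ)) ≤ (1 + 4*t) * ℓ := by
    intro m
    have hm : (0:ℝ) ≤ (m:ℝ) := Nat.cast_nonneg m
    set Sset : Set ℝ := {r : ℝ | ∃ c d : ℝ, c < d ∧ d - c < δ ∧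
      r = (d-c)⁻¹ * ∫ x in Set.Ioc c d, min (Real.exp (u x - av u c d)) (m:ℝ)} with hSset
    have hne : Sset.Nonempty := ⟨_, a, b, hab, hlen, rfl⟩
    have hbdd : BddAbove Sset := by
      refine ⟨(m:ℝ), ?_⟩
      rintro r ⟨c, d, hcd, hdδ, rfl⟩
      have hdc : (0:ℝ) < d - c := sub_pos.2 hcd
      have h1 : (∫ x in Set.Ioc c d, min (Real.exp (u x - av u c d)) (m:ℝ))
          ≤ (d - c) * (m:ℝ) := by
        calc (∫ x in Set.Ioc c d, min (Real.exp (u x - av u c d)) (m:ℝ))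
            ≤ ∫ _x in Set.Ioc c d, (m:ℝ) := by
              apply setIntegral_mono_on (min_exp_int hw hm _ _ _)
                (integrableOn_const (by simp [Real.volume_Ioc]))
                measurableSet_Ioc (fun x _ => min_le_right _ _)
          _ = (d - c) * (m:ℝ) := by
              rw [MeasureTheory.setIntegral_const, MeasureTheory.measureReal_def, Real.volume_Ioc,
                ENNReal.toReal_ofReal hdc.le, smul_eq_mul]
      calc (d-c)⁻¹ * (∫ x in Set.Ioc c d, min (Real.exp (u x - av u c d)) (m:ℝ))
          ≤ (d-c)⁻¹ * ((d - c) * (m:ℝ)) := by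
            apply mul_le_mul_of_nonneg_left h1 (by positivity)
        _ = (m:ℝ) := by field_simp
    set S := sSup Sset with hSdef
    have hSmem : ∀ c d : ℝ, c < d → d - c < δ →
        (d-c)⁻¹ * (∫ x in Set.Ioc c d, min (Real.exp (u x - av u c d)) (m:ℝ)) ≤ S :=
      fun c d h1 h2 => le_csSup hbdd ⟨c, d, h1, h2, rfl⟩
    have hS0 : 0 ≤ S := by
      refine le_trans ?_ (hSmem a b hab hlen)
      apply mul_nonneg (by positivity)
      exact setIntegral_nonneg measurableSet_Ioc fun x _ => le_min (Real.exp_pos _).le hm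
    have hrecS : S ≤ 1 + 2*t^2 + Real.exp (3*t) * t * S := by
      apply csSup_le hne
      rintro r ⟨c, d, h1, h2, rfl⟩
      exact rec_bound hu hw ht ht8 hδ hosc hm hS0 hSmem h1 h2
    have hq1 : Real.exp (3*t) * t * S ≤ (1/5) * S := by
      have h1 : Real.exp (3*t) * t ≤ (8/5) * t :=
        mul_le_mul_of_nonneg_right he3 ht.le
      have h2 : (8/5) * t ≤ 1/5 := by linarith
      calc Real.exp (3*t) * t * S ≤ ((8/5) * t) * S :=
            mul_le_mul_of_nonneg_right h1 hS0
        _ ≤ (1/5) * S := mul_le_mul_of_nonneg_right h2 hS0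
    have hS2 : S ≤ 2 := by nlinarith
    have hq2 : Real.exp (3*t) * t * S ≤ (16/5) * t := by
      have h1 : Real.exp (3*t) * t ≤ (8/5) * t :=
        mul_le_mul_of_nonneg_right he3 ht.le
      calc Real.exp (3*t) * t * S ≤ Real.exp (3*t) * t * 2 := by
            apply mul_le_mul_of_nonneg_left hS2 (by positivity)
        _ ≤ ((8/5) * t) * 2 := by
            apply mul_le_mul_of_nonneg_right h1 (by norm_num)
        _ = (16/5) * t := by ring
    have hrec := rec_bound hu hw ht ht8 hδ hosc hm hS0 hSmem hab hlen
    have hTm : ℓ⁻¹ * (∫ x in Set.Ioc a b, min (Real.exp (u x - av u a b)) (m:ℝ)) ≤ 1 + 4*t := by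
      have ht2 : 2*t^2 ≤ t/4 := by nlinarith
      calc ℓ⁻¹ * (∫ x in Set.Ioc a b, min (Real.exp (u x - av u a b)) (m:ℝ))
          ≤ 1 + 2*t^2 + Real.exp (3*t) * t * S := hrec
        _ ≤ 1 + t/4 + (16/5)*t := by linarith
        _ ≤ 1 + 4*t := by linarith
    have := mul_le_mul_of_nonneg_left hTm hℓ.le
    rw [← mul_assoc, mul_inv_cancel₀ hℓ.ne', one_mul] at this
    linarith [this]
  -- monotone convergence
  have hmct : Tendsto (fun m : ℕ => ∫ x in Set.Ioc a b, min (Real.exp (u x - av u a b)) (m:ℝ))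
      atTop (𝓝 (∫ x in Set.Ioc a b, Real.exp (u x - av u a b))) := by
    apply MeasureTheory.integral_tendsto_of_tendsto_of_monotone
    · exact fun m => min_exp_int hw (Nat.cast_nonneg m) _ _ _
    · exact exp_shift_int hw _ _ _
    · refine Eventually.of_forall fun x m m' hmm' => ?_
      exact min_le_min le_rfl (by exact_mod_cast hmm')
    · refine Eventually.of_forall fun x => ?_
      have hev : ∀ᶠ (m:ℕ) in atTop, min (Real.exp (u x - av u a b)) (m:ℝ)
          = Real.exp (u x - av u a b) := by
        rw [eventually_atTop]
        refine ⟨⌈Real.exp (u x - av u a b)⌉₊, fun m hm => min_eq_left ?_⟩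
        exact (Nat.le_ceil _).trans (by exact_mod_cast hm)
      exact Tendsto.congr' (hev.mono fun m hm => hm.symm) tendsto_const_nhds
  have hlimit : (∫ x in Set.Ioc a b, Real.exp (u x - av u a b)) ≤ (1 + 4*t) * ℓ :=
    le_of_tendsto hmct (Eventually.of_forall hstep)
  calc (b - a)⁻¹ * (∫ x in Set.Ioc a b, Real.exp (u x - av u a b))
      ≤ ℓ⁻¹ * ((1 + 4*t) * ℓ) := by
        apply mul_le_mul_of_nonneg_left hlimit (by positivity)
    _ = 1 + 4*t := by field_simp

end JNAux

open JNAux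

/-- (Mitsis) Let `ω` be a weight on `ℝ` with `log ω ∈ BMO(ℝ)`. Then `log ω ∈ VMO(ℝ)` if and
only if `lim_{δ→0} sup_{|I|<δ} ((1/|I|)∫_I ω) exp(-(1/|I|)∫_I log ω) = 1` over bounded
intervals `I ⊂ ℝ` (the asymptotic reverse Jensen inequality). -/
theorem log_vmo_iff_asymptotic_reverse_jensen (ω : ℝ → ℝ) (hω : ∀ x, 0 < ω x)
    (hloc : LocallyIntegrable ω volume)
    (hlogloc : LocallyIntegrable (fun x => Real.log (ω x)) volume)
    (hBMO : ∃ M : ℝ, ∀ a b : ℝ, a < b → meanOsc (fun x => Real.log (ω x)) a b ≤ M) :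
    (∀ ε > 0, ∃ δ > 0, ∀ a b : ℝ, a < b → b - a < δ →
        meanOsc (fun x => Real.log (ω x)) a b < ε) ↔
    (∀ ε > 0, ∃ δ > 0, ∀ a b : ℝ, a < b → b - a < δ →
        |intervalAvg ω a b *
          Real.exp (-(intervalAvg (fun x => Real.log (ω x)) a b)) - 1| < ε) := by
  set u : ℝ → ℝ := fun x => Real.log (ω x) with hu_def
  have hωu : ∀ x, ω x = Real.exp (u x) := fun x => (Real.exp_log (hω x)).symm
  have hw : LocallyIntegrable (fun x => Real.exp (u x)) volume := by
    have h : (fun x => Real.exp (u x)) = ω := funext fun x => (hωu x).symm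
    rw [h]; exact hloc
  constructor
  · -- VMO implies asymptotic reverse Jensen
    intro hvmo ε hε
    set t := min (ε/5) (1/8) with htdef
    have ht : 0 < t := lt_min (by positivity) (by norm_num)
    have ht8 : t ≤ 1/8 := min_le_right _ _
    obtain ⟨δ, hδ, hδ'⟩ := hvmo (t^2) (by positivity)
    refine ⟨δ, hδ, fun a b hab hlen => ?_⟩
    have hosc : ∀ c d : ℝ, c < d → d - c < δ → meanOsc u c d ≤ t ^ 2 :=
      fun c d h1 h2 => (hδ' c d h1 h2).le
    have hℓ : (0:ℝ) < b - a := sub_pos.2 hab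
    have hexpid : ∫ x in Set.Ioc a b, Real.exp (u x - av u a b)
        = (∫ x in Set.Ioc a b, ω x) * Real.exp (-(av u a b)) := by
      rw [← MeasureTheory.integral_mul_const]
      apply setIntegral_congr_fun measurableSet_Ioc
      intro x _
      show Real.exp (u x - av u a b) = ω x * Real.exp (-av u a b)
      rw [hωu x, ← Real.exp_add]
      ring_nf
    have hRid : intervalAvg ω a b * Real.exp (-(intervalAvg u a b))
        = (b - a)⁻¹ * ∫ x in Set.Ioc a b, Real.exp (u x - av u a b) := by
      rw [intervalAvg_eq_av ω hab.le, intervalAvg_eq_av u hab.le, av, hexpid]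
      ring
    have hupper := jn_bound hlogloc hw ht ht8 hδ hosc hab hlen
    have hlower : 1 ≤ (b - a)⁻¹ * ∫ x in Set.Ioc a b, Real.exp (u x - av u a b) := by
      have hconst : IntegrableOn (fun _ : ℝ => (1:ℝ)) (Set.Ioc a b) volume :=
        integrableOn_const (by simp [Real.volume_Ioc])
      have hv_int : IntegrableOn (fun x => u x - av u a b) (Set.Ioc a b) volume :=
        (integrableOn_Ioc hlogloc a b).sub
          (integrableOn_const (by simp [Real.volume_Ioc]))
      have h1 : ∫ x in Set.Ioc a b, (1 + (u x - av u a b))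
          ≤ ∫ x in Set.Ioc a b, Real.exp (u x - av u a b) := by
        apply setIntegral_mono_on (hconst.add hv_int) (exp_shift_int hw _ _ _)
          measurableSet_Ioc
        intro x _
        show (1:ℝ) + (u x - av u a b) ≤ Real.exp (u x - av u a b)
        linarith [Real.add_one_le_exp (u x - av u a b)]
      have h2 : ∫ x in Set.Ioc a b, (1 + (u x - av u a b)) = b - a := by
        rw [MeasureTheory.integral_add hconst hv_int,
          av_sub_const hlogloc hab (av u a b), MeasureTheory.setIntegral_const, MeasureTheory.measureReal_def,
          Real.volume_Ioc, ENNReal.toReal_ofReal hℓ.le, smul_eq_mul, mul_one,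
          sub_self, mul_zero, add_zero]
      have h3 : (b - a) ≤ ∫ x in Set.Ioc a b, Real.exp (u x - av u a b) := by
        rw [← h2]; exact h1
      have := mul_le_mul_of_nonneg_left h3 (by positivity : (0:ℝ) ≤ (b-a)⁻¹)
      rwa [inv_mul_cancel₀ hℓ.ne'] at this
    rw [hRid, abs_lt]
    have htε : t ≤ ε/5 := min_le_left _ _
    constructor
    · linarith
    · linarith [hupper]
  · -- asymptotic reverse Jensen implies VMO
    intro hrj ε hε
    obtain ⟨δ, hδ, hδ'⟩ := hrj (ε^2/9) (by positivity)
    refine ⟨δ, hδ, fun a b hab hlen => ?_⟩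
    have h1 := easy_dir ω u hωu hloc hlogloc hab (show (0:ℝ) < ε/3 by positivity)
    have h2 := hδ' a b hab hlen
    have h3 : av ω a b * Real.exp (-(av u a b)) - 1 < ε^2/9 := by
      have := (abs_lt.1 h2).2
      rwa [intervalAvg_eq_av ω hab.le, intervalAvg_eq_av u hab.le] at this
    have hden : (0:ℝ) < ε/3 := by positivity
    calc meanOsc u a b
        ≤ ε/3 + 2 * (av ω a b * Real.exp (-(av u a b)) - 1) / (ε/3) := h1
      _ < ε/3 + 2 * (ε^2/9) / (ε/3) := by
          apply add_lt_add_right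
          rw [div_lt_div_iff_of_pos_right hden]
          linarith
      _ = ε := by field_simp; ring
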